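/- Let (x^k)_{k≥0} be a sequence in a real inner product space with ‖x^k‖ ≤ M for all k, let (t_k)_{k≥0} be nonnegative reals and (u^k)_{k≥0} unit vectors with x^k − x^{k−1} = t_{k−1} u^{k−1} for all k ≥ 1, and suppose Σ_{k≥1} ‖u^k − u^{k−1}‖² < +∞. Then for every λ > 0 there exist a natural number Δ ≥ 1 and an index k₀ such that for every k ≥ k₀, the number of indices i with k ≤ i ≤ k + Δ − 1 and t_{i−1} > λ is at most Δ/2. -/

import Mathlib

section Aux

variable {H : Type*} [NormedAddCommGroup H] [InnerProductSpace ℝ H]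

/-- Telescoping bound on the change of directions. -/
lemma aux_u_dist (u : ℕ → H) (a n : ℕ) :
    ‖u (a + n) - u a‖ ≤ ∑ m ∈ Finset.range n, ‖u (a + m + 1) - u (a + m)‖ := by
  induction n with
  | zero => simp
  | succ n ih =>
      rw [Finset.sum_range_succ]
      show ‖u (a + n + 1) - u a‖ ≤ _
      calc ‖u (a + n + 1) - u a‖
          ≤ ‖u (a + n + 1) - u (a + n)‖ + ‖u (a + n) - u a‖ := by
            simpa using norm_sub_le_norm_sub_add_norm_sub (u (a + n + 1)) (u (a+n)) (u a)
        _ ≤ (∑ m ∈ Finset.range n, ‖u (a + m + 1) - u (a + m)‖) + ‖u (a + n + 1) - u (a + n)‖ := by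
            linarith

/-- Telescoping formula for the iterates. -/
lemma aux_x_tele (x : ℕ → H) (t : ℕ → ℝ) (u : ℕ → H)
    (hstep : ∀ k : ℕ, x (k + 1) - x k = t k • u k) (a n : ℕ) :
    x (a + n) - x a = ∑ m ∈ Finset.range n, t (a + m) • u (a + m) := by
  induction n with
  | zero => simp
  | succ n ih =>
      rw [Finset.sum_range_succ, ← ih, ← add_assoc]
      have := hstep (a + n)
      abel_nf
      abel_nf at this ih ⊢
      linear_combination (norm := abel_nf) this

end Aux

/-- Analytic core of the proof of Theorem 4.1: if the iterates `xᵏ` are bounded,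
`xᵏ⁺¹ − xᵏ = tₖ uᵏ` with `tₖ ≥ 0` and unit `uᵏ`, and `Σ ‖uᵏ⁺¹ − uᵏ‖² < ∞`, then
for every `λ > 0` there are `Δ ≥ 1` and `k₀` such that every window
`[k, k+Δ−1]` with `k ≥ k₀` contains at most `Δ/2` indices `i` with `t_{i−1} > λ`. -/
theorem few_large_steps {H : Type*} [NormedAddCommGroup H] [InnerProductSpace ℝ H]
    (x : ℕ → H) (t : ℕ → ℝ) (u : ℕ → H) (M : ℝ)
    (hx : ∀ k, ‖x k‖ ≤ M) (ht : ∀ k, 0 ≤ t k) (hu : ∀ k, ‖u k‖ = 1)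
    (hstep : ∀ k : ℕ, x (k + 1) - x k = t k • u k)
    (hsum : Summable fun k : ℕ => ‖u (k + 1) - u k‖ ^ 2) :
    ∀ lam : ℝ, 0 < lam → ∃ Δ : ℕ, 1 ≤ Δ ∧ ∃ k₀ : ℕ, ∀ k ≥ k₀,
      ((((Finset.Icc k (k + Δ - 1)).filter fun i => lam < t (i - 1)).card : ℝ)
        ≤ (Δ : ℝ) / 2) := by
  classical
  intro lam hlam
  have hM0 : 0 ≤ M := le_trans (norm_nonneg _) (hx 0)
  set f : ℕ → ℝ := fun k => ‖u (k + 1) - u k‖ ^ 2 with hf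
  have hfnn : ∀ k, 0 ≤ f k := fun k => sq_nonneg _
  set Δ : ℕ := ⌈8 * M / lam⌉₊ + 1 with hΔdef
  have hΔ1 : 1 ≤ Δ := Nat.le_add_left 1 _
  have hΔpos : (0 : ℝ) < (Δ : ℝ) := by exact_mod_cast Nat.lt_of_lt_of_le Nat.zero_lt_one hΔ1
  have hΔge : 8 * M / lam ≤ (Δ : ℝ) := by
    calc 8 * M / lam ≤ (⌈8 * M / lam⌉₊ : ℝ) := Nat.le_ceil _
      _ ≤ (Δ : ℝ) := by exact_mod_cast Nat.le_succ _
  -- tails go to zero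
  set S : ℝ := ∑' k, f k with hS
  have htail : ∀ a : ℕ, S - ∑ i ∈ Finset.range a, f i = ∑' i, f (i + a) := by
    intro a
    have := (hsum.sum_add_tsum_nat_add a)
    linarith
  have htends : Filter.Tendsto (fun n => ∑ i ∈ Finset.range n, f i) Filter.atTop (nhds S) :=
    hsum.hasSum.tendsto_sum_nat
  have htends0 : Filter.Tendsto (fun n => S - ∑ i ∈ Finset.range n, f i) Filter.atTop (nhds 0) := by
    simpa using (tendsto_const_nhds (x := S)).sub htends
  obtain ⟨N₀, hN₀⟩ : ∃ N₀ : ℕ, ∀ a ≥ N₀, S - ∑ i ∈ Finset.range a, f i ≤ 1 / (Δ : ℝ) := by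
    have h1 : (0 : ℝ) < 1 / (Δ : ℝ) := by positivity
    have := htends0.eventually (eventually_le_nhds h1)
    exact this.exists_forall_of_atTop
  refine ⟨Δ, hΔ1, N₀ + 1, ?_⟩
  intro k hk
  have hk1 : 1 ≤ k := le_trans (Nat.le_add_left 1 N₀) hk
  set a : ℕ := k - 1 with ha
  have hak : a + 1 = k := Nat.succ_pred_eq_of_pos hk1
  have haN₀ : N₀ ≤ a := by omega
  -- tail bound at a
  have htail_a : ∑' i, f (i + a) ≤ 1 / (Δ : ℝ) := (htail a) ▸ hN₀ a haN₀
  have hshift : Summable fun i => f (i + a) := (summable_nat_add_iff a).mpr hsum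
  -- direction stability within the window
  have hinner : ∀ m ∈ Finset.range Δ, (1 : ℝ) / 2 ≤ inner ℝ (u (a + m)) (u a) := by
    intro m hm
    have hmΔ : m ≤ Δ := (Finset.mem_range.mp hm).le
    have h1 : ‖u (a + m) - u a‖ ≤ ∑ j ∈ Finset.range m, ‖u (a + j + 1) - u (a + j)‖ :=
      aux_u_dist u a m
    have h2 : (∑ j ∈ Finset.range m, ‖u (a + j + 1) - u (a + j)‖) ^ 2
        ≤ (m : ℝ) * ∑ j ∈ Finset.range m, ‖u (a + j + 1) - u (a + j)‖ ^ 2 := by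
      have := sq_sum_le_card_mul_sum_sq
        (s := Finset.range m) (f := fun j => ‖u (a + j + 1) - u (a + j)‖)
      simpa using this
    have h3 : ∑ j ∈ Finset.range m, ‖u (a + j + 1) - u (a + j)‖ ^ 2 ≤ ∑' i, f (i + a) := by
      have : ∀ j ∈ Finset.range m, ‖u (a + j + 1) - u (a + j)‖ ^ 2 = f (j + a) := by
        intro j _; simp only [hf]; ring_nf
      rw [Finset.sum_congr rfl this]
      exact hshift.sum_le_tsum _ (fun j _ => hfnn _)
    have hsq : ‖u (a + m) - u a‖ ^ 2 ≤ 1 := by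
      have hb : ‖u (a + m) - u a‖ ^ 2
          ≤ (∑ j ∈ Finset.range m, ‖u (a + j + 1) - u (a + j)‖) ^ 2 := by
        apply pow_le_pow_left₀ (norm_nonneg _) h1
      calc ‖u (a + m) - u a‖ ^ 2
          ≤ (m : ℝ) * ∑ j ∈ Finset.range m, ‖u (a + j + 1) - u (a + j)‖ ^ 2 := hb.trans h2
        _ ≤ (Δ : ℝ) * (1 / (Δ : ℝ)) := by
            apply mul_le_mul (by exact_mod_cast hmΔ) (h3.trans htail_a)
              (Finset.sum_nonneg fun j _ => sq_nonneg _) hΔpos.le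
        _ = 1 := by field_simp
    have hexp : ‖u (a + m) - u a‖ ^ 2
        = 2 - 2 * inner ℝ (u (a + m)) (u a) := by
      rw [@norm_sub_sq_real, hu, hu]; ring
    rw [hexp] at hsq
    linarith
  -- the sum of t over the window, weighted count
  set N : ℕ := ((Finset.Icc k (k + Δ - 1)).filter fun i => lam < t (i - 1)).card with hN
  have hsum_eq : ∑ i ∈ Finset.Icc k (k + Δ - 1), t (i - 1)
      = ∑ m ∈ Finset.range Δ, t (a + m) := by
    have hIcc : Finset.Icc k (k + Δ - 1) = Finset.Ico k (k + Δ) := by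
      have h1 : k + Δ - 1 + 1 = k + Δ := by omega
      rw [← Finset.Ico_add_one_right_eq_Icc, h1]
    rw [hIcc, Finset.sum_Ico_eq_sum_range]
    have hsub : k + Δ - k = Δ := by omega
    rw [hsub]
    refine Finset.sum_congr rfl fun m _ => ?_
    congr 1
    omega
  -- weighted count bound
  have hcount : lam * (N : ℝ) ≤ ∑ m ∈ Finset.range Δ, t (a + m) := by
    rw [← hsum_eq]
    calc lam * (N : ℝ)
        ≤ ∑ i ∈ (Finset.Icc k (k + Δ - 1)).filter (fun i => lam < t (i - 1)), t (i - 1) := by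
          rw [mul_comm]
          have := Finset.card_nsmul_le_sum
            ((Finset.Icc k (k + Δ - 1)).filter (fun i => lam < t (i - 1)))
            (fun i => t (i - 1)) lam (fun i hi => (Finset.mem_filter.mp hi).2.le)
          simpa [hN, nsmul_eq_mul] using this
      _ ≤ ∑ i ∈ Finset.Icc k (k + Δ - 1), t (i - 1) :=
          Finset.sum_le_sum_of_subset_of_nonneg (Finset.filter_subset _ _)
            (fun i _ _ => ht _)
  -- main estimate via the inner product with u a
  have hmain : ∑ m ∈ Finset.range Δ, t (a + m) ≤ 4 * M := by
    have htele := aux_x_tele x t u hstep a Δ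
    have hinnerv : (inner ℝ (x (a + Δ) - x a) (u a) : ℝ)
        = ∑ m ∈ Finset.range Δ, t (a + m) * inner ℝ (u (a + m)) (u a) := by
      rw [htele, sum_inner]
      exact Finset.sum_congr rfl fun m _ => real_inner_smul_left _ _ _
    have hlow : (1 / 2 : ℝ) * ∑ m ∈ Finset.range Δ, t (a + m)
        ≤ inner ℝ (x (a + Δ) - x a) (u a) := by
      rw [hinnerv, Finset.mul_sum]
      refine Finset.sum_le_sum fun m hm => ?_
      have h1 := hinner m hm
      have h2 := ht (a + m)
      calc 1 / 2 * t (a + m) = t (a + m) * (1 / 2) := by ring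
        _ ≤ t (a + m) * inner ℝ (u (a + m)) (u a) := by
            exact mul_le_mul_of_nonneg_left h1 h2
    have hup : (inner ℝ (x (a + Δ) - x a) (u a) : ℝ) ≤ 2 * M := by
      calc (inner ℝ (x (a + Δ) - x a) (u a) : ℝ)
          ≤ ‖x (a + Δ) - x a‖ * ‖u a‖ := real_inner_le_norm _ _
        _ = ‖x (a + Δ) - x a‖ := by rw [hu, mul_one]
        _ ≤ ‖x (a + Δ)‖ + ‖x a‖ := norm_sub_le _ _
        _ ≤ 2 * M := by have := hx (a + Δ); have := hx a; linarith
    linarith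
  -- conclude
  have hlamN : lam * (N : ℝ) ≤ 4 * M := hcount.trans hmain
  have h8M : 8 * M ≤ (Δ : ℝ) * lam := by
    have := hΔge
    rw [div_le_iff₀ hlam] at this
    linarith
  have : (N : ℝ) ≤ (Δ : ℝ) / 2 := by
    rw [← hN] at *
    nlinarith
  simpa [hN] using this
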